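/- Let τ, γ, λ > 0, U ∈ ℝ^{p×n}, V ∈ ℝ^{p×m}, and define Ψ(W) := (τ/2)‖U − VW‖² + (γ/2)‖W‖² for W ∈ ℝ^{m×n}. Fix β > 0. Then W* ∈ ℝ^{m×n} satisfies the inclusion W* ∈ Prox_{βλ‖·‖_{0,2}}(W* − β∇Ψ(W*)) if and only if for every row index s ∈ [m]: if W*_{s:} ≠ 0 then (∇Ψ(W*))_{s:} = 0 and ‖W*_{s:}‖ ≥ √(2βλ), and if W*_{s:} = 0 then ‖(∇Ψ(W*))_{s:}‖ ≤ √(2λ/β). -/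

import Mathlib

set_option autoImplicit false

open Matrix

/-- Squared Frobenius norm of a matrix. -/
def frobSq {m n : ℕ} (W : Matrix (Fin m) (Fin n) ℝ) : ℝ :=
  ∑ i, ∑ j, (W i j) ^ 2

/-- Euclidean norm of a (row) vector. -/
noncomputable def rowNorm {n : ℕ} (v : Fin n → ℝ) : ℝ :=
  Real.sqrt (∑ j, (v j) ^ 2)

open Classical in
/-- `‖W‖_{0,2}`: the number of nonzero rows of `W`, as a real number. -/
noncomputable def norm02 {m n : ℕ} (W : Matrix (Fin m) (Fin n) ℝ) : ℝ :=
  ((Finset.univ.filter fun s : Fin m => W s ≠ 0).card : ℝ)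

/-- The proximal operator (as a set of global minimizers):
`Prox_β G (H) = argmin_W { G(W) + (1/(2β))‖W − H‖² }`. -/
def ProxSet {m n : ℕ} (β : ℝ) (G : Matrix (Fin m) (Fin n) ℝ → ℝ)
    (H : Matrix (Fin m) (Fin n) ℝ) : Set (Matrix (Fin m) (Fin n) ℝ) :=
  {W | ∀ Z : Matrix (Fin m) (Fin n) ℝ,
    G W + (1 / (2 * β)) * frobSq (W - H) ≤ G Z + (1 / (2 * β)) * frobSq (Z - H)}

/-- The gradient of `Ψ(W) = (τ/2)‖U − VW‖² + (γ/2)‖W‖²`, namely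
`∇Ψ(W) = τ Vᵀ(VW − U) + γ W`. -/
def gradPsi {p m n : ℕ} (τ γ : ℝ) (U : Matrix (Fin p) (Fin n) ℝ)
    (V : Matrix (Fin p) (Fin m) ℝ) (W : Matrix (Fin m) (Fin n) ℝ) :
    Matrix (Fin m) (Fin n) ℝ :=
  τ • (Vᵀ * (V * W - U)) + γ • W

/-- A vector with vanishing sum of squares is zero. -/
lemma sq_sum_zero {n : ℕ} (v : Fin n → ℝ) (h : ∑ j, (v j) ^ 2 = 0) : v = 0 := by
  funext j
  have := (Finset.sum_eq_zero_iff_of_nonneg (fun i _ => sq_nonneg (v i))).mp h j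
    (Finset.mem_univ j)
  simpa using pow_eq_zero_iff (n := 2) (by norm_num) |>.mp this

/-- Minimizing a row-separable objective is equivalent to minimizing each row. -/
lemma sep_min {m n : ℕ} (f : Fin m → (Fin n → ℝ) → ℝ) (W : Matrix (Fin m) (Fin n) ℝ) :
    (∀ Z : Matrix (Fin m) (Fin n) ℝ, ∑ s, f s (W s) ≤ ∑ s, f s (Z s)) ↔
    ∀ s : Fin m, ∀ z : Fin n → ℝ, f s (W s) ≤ f s z := by
  constructor
  · intro h s z
    have h1 := h (Function.update W s z)
    have e1 : ∑ t, f t (Function.update W s z t)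
        = f s z + ∑ t ∈ Finset.univ.erase s, f t (W t) := by
      rw [← Finset.add_sum_erase _ _ (Finset.mem_univ s),
        show Function.update W s z s = z from Function.update_self s z W]
      congr 1
      refine Finset.sum_congr rfl fun t ht => ?_
      rw [show Function.update W s z t = W t from
        Function.update_of_ne (Finset.ne_of_mem_erase ht) z W]
    have e2 : ∑ t, f t (W t) = f s (W s) + ∑ t ∈ Finset.univ.erase s, f t (W t) :=
      (Finset.add_sum_erase _ _ (Finset.mem_univ s)).symm
    rw [e1, e2] at h1
    linarith
  · intro h Z
    exact Finset.sum_le_sum fun s _ => h s (Z s)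

/-- Characterization of minimizers of the scalar (single-row) prox subproblem. -/
lemma row_min_iff {n : ℕ} {lam β : ℝ} (hlam : 0 < lam) (hβ : 0 < β)
    (w d : Fin n → ℝ) :
    (∀ z : Fin n → ℝ,
        (if w = 0 then 0 else lam) + (1/(2*β)) * ∑ j, (w j - (w j - β * d j))^2
          ≤ (if z = 0 then 0 else lam) + (1/(2*β)) * ∑ j, (z j - (w j - β * d j))^2) ↔
      ((w ≠ 0 → d = 0 ∧ 2 * β * lam ≤ ∑ j, (w j)^2) ∧
       (w = 0 → ∑ j, (d j)^2 ≤ 2 * lam / β)) := by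
  have hc : (0:ℝ) < 1/(2*β) := by positivity
  have hfw : (1/(2*β)) * ∑ j, (w j - (w j - β * d j))^2 = (β/2) * ∑ j, (d j)^2 := by
    rw [Finset.sum_congr rfl fun j _ => (by ring : (w j - (w j - β * d j))^2 = β^2 * (d j)^2),
      ← Finset.mul_sum]
    field_simp
  have hsd : (0:ℝ) ≤ ∑ j, (d j)^2 := Finset.sum_nonneg fun j _ => sq_nonneg _
  have hsw : (0:ℝ) ≤ ∑ j, (w j)^2 := Finset.sum_nonneg fun j _ => sq_nonneg _
  constructor
  · intro h
    constructor
    · intro hw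
      have hzh := h (fun j => w j - β * d j)
      have hz0 := h 0
      rw [if_neg hw, hfw] at hzh hz0
      have ezero : ∑ j, ((fun j => w j - β * d j) j - (w j - β * d j))^2 = 0 := by simp
      rw [ezero, mul_zero, add_zero] at hzh
      have hd0 : d = 0 := by
        by_cases hh : (fun j => w j - β * d j) = (0 : Fin n → ℝ)
        · exfalso
          rw [if_pos hh] at hzh
          nlinarith [mul_nonneg hβ.le hsd]
        · rw [if_neg hh] at hzh
          have hle : ∑ j, (d j)^2 ≤ 0 := by nlinarith
          exact sq_sum_zero d (le_antisymm hle hsd)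
      refine ⟨hd0, ?_⟩
      rw [if_pos rfl] at hz0
      have hsum : ∑ j, ((0 : Fin n → ℝ) j - (w j - β * d j))^2 = ∑ j, (w j)^2 := by
        refine Finset.sum_congr rfl fun j _ => ?_
        have : d j = 0 := by rw [hd0]; rfl
        simp [this]
      rw [hsum] at hz0
      have hdz : ∑ j, (d j)^2 = 0 := by
        rw [hd0]; simp
      rw [hdz, mul_zero, add_zero, zero_add] at hz0
      rw [one_div] at hz0
      rw [inv_mul_eq_div, le_div_iff₀ (by positivity)] at hz0
      linarith
    · intro hw
      have hzh := h (fun j => w j - β * d j)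
      rw [if_pos hw, hfw, zero_add] at hzh
      have ezero : ∑ j, ((fun j => w j - β * d j) j - (w j - β * d j))^2 = 0 := by simp
      rw [ezero, mul_zero, add_zero] at hzh
      by_cases hh : (fun j => w j - β * d j) = (0 : Fin n → ℝ)
      · have hd0 : d = 0 := by
          funext j
          have h1 := congrFun hh j
          have h2 : w j = 0 := by rw [hw]; rfl
          simp only [h2, zero_sub, Pi.zero_apply, neg_eq_zero] at h1
          have : d j = 0 := by
            rcases mul_eq_zero.mp h1 with h | h
            · exact absurd h (ne_of_gt hβ)
            · exact h
          simpa using this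
        rw [hd0]
        simp
        positivity
      · rw [if_neg hh] at hzh
        rw [le_div_iff₀ hβ]
        nlinarith
  · rintro ⟨h1, h2⟩ z
    by_cases hw : w = 0
    · subst hw
      have hS := h2 rfl
      rw [if_pos rfl, hfw, zero_add]
      have hlhs : (β/2) * ∑ j, (d j)^2 ≤ lam := by
        rw [le_div_iff₀ hβ] at hS
        nlinarith
      by_cases hz : z = 0
      · subst hz
        rw [if_pos rfl, zero_add, hfw]
      · rw [if_neg hz]
        have : (0:ℝ) ≤ (1/(2*β)) * ∑ j, (z j - ((0:Fin n → ℝ) j - β * d j))^2 :=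
          mul_nonneg hc.le (Finset.sum_nonneg fun j _ => sq_nonneg _)
        linarith
    · obtain ⟨hd0, hsw2⟩ := h1 hw
      rw [if_neg hw, hfw]
      have hdz : ∑ j, (d j)^2 = 0 := by rw [hd0]; simp
      rw [hdz, mul_zero, add_zero]
      by_cases hz : z = 0
      · subst hz
        rw [if_pos rfl, zero_add]
        have hsum : ∑ j, ((0 : Fin n → ℝ) j - (w j - β * d j))^2 = ∑ j, (w j)^2 := by
          refine Finset.sum_congr rfl fun j _ => ?_
          have : d j = 0 := by rw [hd0]; rfl
          simp [this]
        rw [hsum, one_div, inv_mul_eq_div, le_div_iff₀ (by positivity)]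
        linarith
      · rw [if_neg hz]
        have : (0:ℝ) ≤ (1/(2*β)) * ∑ j, (z j - (w j - β * d j))^2 :=
          mul_nonneg hc.le (Finset.sum_nonneg fun j _ => sq_nonneg _)
        linarith

/-- `W*` satisfies `W* ∈ Prox_{βλ‖·‖_{0,2}}(W* − β∇Ψ(W*))` iff for every
row `s`: nonzero rows of `W*` have vanishing gradient row and norm at least `√(2βλ)`,
while zero rows have gradient row norm at most `√(2λ/β)`. -/
theorem pStationary_characterization
    (p m n : ℕ) (τ γ lam β : ℝ) (hτ : 0 < τ) (hγ : 0 < γ) (hlam : 0 < lam)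
    (hβ : 0 < β)
    (U : Matrix (Fin p) (Fin n) ℝ) (V : Matrix (Fin p) (Fin m) ℝ)
    (Wstar : Matrix (Fin m) (Fin n) ℝ) :
    Wstar ∈ ProxSet β (fun W => lam * norm02 W)
        (Wstar - β • gradPsi τ γ U V Wstar) ↔
      ∀ s : Fin m,
        (Wstar s ≠ 0 →
          gradPsi τ γ U V Wstar s = 0 ∧
            rowNorm (Wstar s) ≥ Real.sqrt (2 * β * lam)) ∧
        (Wstar s = 0 →
          rowNorm (gradPsi τ γ U V Wstar s) ≤ Real.sqrt (2 * lam / β)) := by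
  set g := gradPsi τ γ U V Wstar with hg
  set f : Fin m → (Fin n → ℝ) → ℝ := fun s z =>
    (if z = 0 then 0 else lam) + (1/(2*β)) * ∑ j, (z j - (Wstar s j - β * g s j))^2
    with hf
  have hobj : ∀ Z : Matrix (Fin m) (Fin n) ℝ,
      lam * norm02 Z + (1/(2*β)) * frobSq (Z - (Wstar - β • g)) = ∑ s, f s (Z s) := by
    intro Z
    have h1 : lam * norm02 Z = ∑ s, (if Z s = 0 then (0:ℝ) else lam) := by
      rw [norm02,
        show (∑ s, (if Z s = 0 then (0:ℝ) else lam))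
          = ∑ s, (if Z s ≠ 0 then lam else 0) from
          Finset.sum_congr rfl (fun s _ => by by_cases h : Z s = 0 <;> simp [h]),
        ← Finset.sum_filter, Finset.sum_const, nsmul_eq_mul, mul_comm]
      congr
    have h2 : (1/(2*β)) * frobSq (Z - (Wstar - β • g))
        = ∑ s, (1/(2*β)) * ∑ j, (Z s j - (Wstar s j - β * g s j))^2 := by
      rw [frobSq, Finset.mul_sum]
      refine Finset.sum_congr rfl fun s _ => ?_
      simp [Matrix.sub_apply, Matrix.smul_apply, smul_eq_mul]
    rw [h1, h2, ← Finset.sum_add_distrib]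
  have hmem : (Wstar ∈ ProxSet β (fun W => lam * norm02 W) (Wstar - β • g)) ↔
      (∀ Z : Matrix (Fin m) (Fin n) ℝ, ∑ s, f s (Wstar s) ≤ ∑ s, f s (Z s)) := by
    simp only [ProxSet, Set.mem_setOf_eq]
    constructor
    · intro h Z
      rw [← hobj Wstar, ← hobj Z]; exact h Z
    · intro h Z
      have := h Z
      rw [← hobj Wstar, ← hobj Z] at this; exact this
  rw [hmem, sep_min]
  refine forall_congr' fun s => ?_
  have hrow := row_min_iff (n := n) hlam hβ (Wstar s) (g s)
  rw [hf]
  rw [hrow]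
  have e1 : (2 * β * lam ≤ ∑ j, (Wstar s j)^2)
      ↔ Real.sqrt (2*β*lam) ≤ Real.sqrt (∑ j, (Wstar s j)^2) :=
    (Real.sqrt_le_sqrt_iff (Finset.sum_nonneg fun j _ => sq_nonneg _)).symm
  have e2 : (∑ j, (g s j)^2 ≤ 2 * lam / β)
      ↔ Real.sqrt (∑ j, (g s j)^2) ≤ Real.sqrt (2*lam/β) :=
    (Real.sqrt_le_sqrt_iff (by positivity)).symm
  simp only [ge_iff_le, rowNorm]
  rw [e1, e2]
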